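/- Consider the primal-dual iteration x^{k+1} = A(x^k − γ(∇f(x^k) + ŷ^k)), y^{k+1} = y^k + τ B x^{k+1}, ŷ^{k+1} = 2y^{k+1} − y^k for k ≥ 1, initialized with an arbitrary x¹ ∈ ℝ^{m×d}, y¹ = 0 and ŷ¹ = τ B x¹. Assume (1 − γL_f)I − γτB ⪰ 0 and that there exists λ₂ > 0 with ⟨Bz, z⟩ ≥ λ₂‖z‖² for all z ∈ C^⊥. Let x* be a minimizer of f over C. Then for every integer T ≥ 2, the ergodic average x̄^T = (1/(T−1)) Σ_{k=2}^T x^k satisfies G(x̄^T, x*) ≤ (1/(T−1)) ( ‖x¹ − x*‖²/(2γ) + ‖∇f(x*)‖²/(2τλ₂) ). -/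

import Mathlib

/-- Frobenius inner product on real m×d matrices. -/
noncomputable def ip {m d : ℕ} (x y : Matrix (Fin m) (Fin d) ℝ) : ℝ :=
  ∑ i, ∑ j, x i j * y i j

/-- The consensus subspace C = {1ₘ xᵀ : x ∈ ℝᵈ}. -/
def cC (m d : ℕ) : Set (Matrix (Fin m) (Fin d) ℝ) :=
  {x | ∃ v : Fin d → ℝ, ∀ i j, x i j = v j}

/-- The orthogonal complement C^⊥ = {y : 1ₘᵀ y = 0}. -/
def cPerp (m d : ℕ) : Set (Matrix (Fin m) (Fin d) ℝ) :=
  {y | ∀ j, ∑ i, y i j = 0}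

/-- The Bregman distance G(x, x*) = f(x) − f(x*) − ⟨∇f(x*), x − x*⟩. -/
noncomputable def breg {m d : ℕ} (f : Matrix (Fin m) (Fin d) ℝ → ℝ)
    (gf : Matrix (Fin m) (Fin d) ℝ → Matrix (Fin m) (Fin d) ℝ)
    (x xs : Matrix (Fin m) (Fin d) ℝ) : ℝ :=
  f x - f xs - ip (gf xs) (x - xs)

section aux
open Matrix
variable {m d : ℕ}

lemma ip_comm (x y : Matrix (Fin m) (Fin d) ℝ) : ip x y = ip y x := by
  simp [ip, mul_comm]

lemma ip_add_left (x y z : Matrix (Fin m) (Fin d) ℝ) : ip (x + y) z = ip x z + ip y z := by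
  simp [ip, Matrix.add_apply, add_mul, Finset.sum_add_distrib]

lemma ip_sub_left (x y z : Matrix (Fin m) (Fin d) ℝ) : ip (x - y) z = ip x z - ip y z := by
  simp [ip, Matrix.sub_apply, sub_mul, Finset.sum_sub_distrib]

lemma ip_smul_left (c : ℝ) (x z : Matrix (Fin m) (Fin d) ℝ) : ip (c • x) z = c * ip x z := by
  simp [ip, Matrix.smul_apply, Finset.mul_sum, mul_assoc]

lemma ip_add_right (x y z : Matrix (Fin m) (Fin d) ℝ) : ip z (x + y) = ip z x + ip z y := by
  rw [ip_comm, ip_add_left, ip_comm x z, ip_comm y z]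

lemma ip_sub_right (x y z : Matrix (Fin m) (Fin d) ℝ) : ip z (x - y) = ip z x - ip z y := by
  rw [ip_comm, ip_sub_left, ip_comm x z, ip_comm y z]

lemma ip_smul_right (c : ℝ) (x z : Matrix (Fin m) (Fin d) ℝ) : ip z (c • x) = c * ip z x := by
  rw [ip_comm, ip_smul_left, ip_comm x z]

lemma ip_zero_left (z : Matrix (Fin m) (Fin d) ℝ) : ip 0 z = 0 := by simp [ip]

lemma ip_zero_right (z : Matrix (Fin m) (Fin d) ℝ) : ip z 0 = 0 := by simp [ip]

lemma ip_self_nonneg (x : Matrix (Fin m) (Fin d) ℝ) : 0 ≤ ip x x :=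
  Finset.sum_nonneg fun _ _ => Finset.sum_nonneg fun _ _ => mul_self_nonneg _

lemma ip_eq_trace (x y : Matrix (Fin m) (Fin d) ℝ) : ip x y = Matrix.trace (xᵀ * y) := by
  unfold ip Matrix.trace
  simp only [Matrix.diag_apply, Matrix.mul_apply, Matrix.transpose_apply]
  exact Finset.sum_comm

lemma ip_mul_left (M : Matrix (Fin m) (Fin m) ℝ) (x y : Matrix (Fin m) (Fin d) ℝ) :
    ip (M * x) y = ip x (Mᵀ * y) := by
  rw [ip_eq_trace, ip_eq_trace, Matrix.transpose_mul, Matrix.mul_assoc]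

lemma herm_transpose {M : Matrix (Fin m) (Fin m) ℝ} (hM : M.IsHermitian) : Mᵀ = M := by
  rw [← Matrix.conjTranspose_eq_transpose_of_trivial]; exact hM

lemma ip_symm_mul {M : Matrix (Fin m) (Fin m) ℝ} (hM : M.IsHermitian)
    (x y : Matrix (Fin m) (Fin d) ℝ) : ip (M * x) y = ip x (M * y) := by
  rw [ip_mul_left, herm_transpose hM]

lemma psd_ip {M : Matrix (Fin m) (Fin m) ℝ} (hM : M.PosSemidef)
    (z : Matrix (Fin m) (Fin d) ℝ) : 0 ≤ ip (M * z) z := by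
  have h : ip (M * z) z = ∑ j, dotProduct (star (fun i => z i j)) (M.mulVec (fun i => z i j)) := by
    unfold ip
    rw [Finset.sum_comm]
    refine Finset.sum_congr rfl fun j _ => ?_
    simp [Matrix.mul_apply, Matrix.mulVec, dotProduct, mul_comm]
  rw [h]
  exact Finset.sum_nonneg fun j _ => hM.dotProduct_mulVec_nonneg _

lemma ip_sum_right {ι : Type*} (t : Finset ι) (g : Matrix (Fin m) (Fin d) ℝ)
    (z : ι → Matrix (Fin m) (Fin d) ℝ) : ip g (∑ i ∈ t, z i) = ∑ i ∈ t, ip g (z i) := by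
  classical
  induction t using Finset.induction_on with
  | empty => simp [ip]
  | insert _ _ h ih => rw [Finset.sum_insert h, Finset.sum_insert h, ip_add_right, ih]

end aux

section aux2
open Matrix Filter Set
variable {m d : ℕ}

lemma ip_sub_swap (v w : Matrix (Fin m) (Fin d) ℝ) :
    ip (v - w) (v - w) = ip (w - v) (w - v) := by
  unfold ip
  refine Finset.sum_congr rfl fun i _ => Finset.sum_congr rfl fun j _ => ?_
  simp [Matrix.sub_apply]
  ring

lemma ip_polar (a b : Matrix (Fin m) (Fin d) ℝ) :
    ip (a - b) b = (ip a a - ip b b - ip (a - b) (a - b)) / 2 := by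
  simp only [ip_sub_left, ip_sub_right]
  rw [ip_comm b a]; ring

lemma ip_mul_symm {M : Matrix (Fin m) (Fin m) ℝ} (hM : M.IsHermitian)
    (v w : Matrix (Fin m) (Fin d) ℝ) : ip (M * w) v = ip (M * v) w := by
  rw [ip_symm_mul hM, ip_comm]

lemma ip_polarB {M : Matrix (Fin m) (Fin m) ℝ} (hM : M.IsHermitian)
    (v w : Matrix (Fin m) (Fin d) ℝ) :
    ip (M * (v - w)) v
      = (ip (M * v) v - ip (M * w) w + ip (M * (v - w)) (v - w)) / 2 := by
  simp only [Matrix.mul_sub, ip_sub_left, ip_sub_right]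
  rw [ip_mul_symm hM v w]; ring

lemma psd_sandwich {A : Matrix (Fin m) (Fin m) ℝ} (hA : A.PosSemidef)
    (hIA : ((1 : Matrix (Fin m) (Fin m) ℝ) - A).PosSemidef)
    (s : Matrix (Fin m) (Fin d) ℝ) :
    0 ≤ ip (((1 : Matrix (Fin m) (Fin m) ℝ) - A) * s) (A * s) := by
  classical
  open scoped MatrixOrder in set R := CFC.sqrt A with hR
  open scoped MatrixOrder in have hRpsd : R.PosSemidef := (CFC.sqrt_nonneg A).posSemidef
  open scoped MatrixOrder in have hRR : R * R = A := CFC.sqrt_mul_sqrt_self A hA.nonneg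
  have hcomm : ((1 : Matrix (Fin m) (Fin m) ℝ) - A) * R = R * ((1 : Matrix (Fin m) (Fin m) ℝ) - A) := by
    have : A * R = R * A := by
      calc A * R = R * R * R := by rw [hRR]
        _ = R * A := by rw [Matrix.mul_assoc, hRR]
    simp [Matrix.sub_mul, Matrix.mul_sub, this]
  calc (0:ℝ) ≤ ip (((1 : Matrix (Fin m) (Fin m) ℝ) - A) * (R * s)) (R * s) := psd_ip hIA _
    _ = ip (R * (((1 : Matrix (Fin m) (Fin m) ℝ) - A) * s)) (R * s) := by
        rw [← Matrix.mul_assoc, ← Matrix.mul_assoc, hcomm]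
    _ = ip (((1 : Matrix (Fin m) (Fin m) ℝ) - A) * s) (R * (R * s)) := by
        rw [ip_symm_mul hRpsd.1]
    _ = ip (((1 : Matrix (Fin m) (Fin m) ℝ) - A) * s) (A * s) := by
        rw [← Matrix.mul_assoc, hRR]

lemma mul_cC_eq_zero {M : Matrix (Fin m) (Fin m) ℝ}
    (hM1 : M.mulVec (fun _ => (1:ℝ)) = 0) {c : Matrix (Fin m) (Fin d) ℝ}
    (hc : c ∈ cC m d) : M * c = 0 := by
  obtain ⟨v, hv⟩ := hc
  ext i j
  have h0 : ∑ k, M i k = 0 := by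
    have := congrFun hM1 i
    simpa [Matrix.mulVec, dotProduct] using this
  simp only [Matrix.mul_apply, Matrix.zero_apply]
  calc ∑ k, M i k * c k j = ∑ k, M i k * v j := by
        refine Finset.sum_congr rfl fun k _ => by rw [hv]
    _ = (∑ k, M i k) * v j := by rw [Finset.sum_mul]
    _ = 0 := by rw [h0, zero_mul]

lemma ip_perp_cC {g c : Matrix (Fin m) (Fin d) ℝ} (hg : g ∈ cPerp m d)
    (hc : c ∈ cC m d) : ip g c = 0 := by
  obtain ⟨v, hv⟩ := hc
  unfold ip
  rw [Finset.sum_comm]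
  refine Finset.sum_eq_zero fun j _ => ?_
  calc ∑ i, g i j * c i j = ∑ i, g i j * v j := by
        refine Finset.sum_congr rfl fun i _ => by rw [hv]
    _ = (∑ i, g i j) * v j := by rw [Finset.sum_mul]
    _ = 0 := by rw [hg j, zero_mul]

lemma mul_mem_cPerp {M : Matrix (Fin m) (Fin m) ℝ}
    (hM1 : M.mulVec (fun _ => (1:ℝ)) = 0) (hMs : M.IsHermitian)
    (z : Matrix (Fin m) (Fin d) ℝ) : M * z ∈ cPerp m d := by
  intro j
  have hcol : ∀ k, ∑ i, M i k = 0 := by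
    intro k
    have := congrFun hM1 k
    simp only [Matrix.mulVec, dotProduct, mul_one, Pi.zero_apply] at this
    calc ∑ i, M i k = ∑ i, M k i := by
          refine Finset.sum_congr rfl fun i _ => ?_
          conv_lhs => rw [← herm_transpose hMs]
          rfl
      _ = 0 := this
  simp only [Matrix.mul_apply]
  rw [Finset.sum_comm]
  refine Finset.sum_eq_zero fun k _ => ?_
  rw [← Finset.sum_mul, hcol k, zero_mul]

end aux2

section aux3
open Matrix Filter Set
variable {m d : ℕ}

lemma grad_conv {f : Matrix (Fin m) (Fin d) ℝ → ℝ}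
    {gf : Matrix (Fin m) (Fin d) ℝ → Matrix (Fin m) (Fin d) ℝ}
    (hconv : ConvexOn ℝ Set.univ f)
    (hgrad : ∀ x v : Matrix (Fin m) (Fin d) ℝ,
      HasDerivAt (fun t : ℝ => f (x + t • v)) (ip (gf x) v) 0)
    (z w : Matrix (Fin m) (Fin d) ℝ) :
    f z + ip (gf z) (w - z) ≤ f w := by
  set φ : ℝ → ℝ := fun t => f (z + t • (w - z)) with hφ
  have hD : HasDerivAt φ (ip (gf z) (w - z)) 0 := hgrad z (w - z)
  have hφ0 : φ 0 = f z := by simp [hφ]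
  have key : ∀ t ∈ Set.Ioc (0:ℝ) 1, slope φ 0 t ≤ f w - f z := by
    intro t ht
    have h1 : z + t • (w - z) = (1 - t) • z + t • w := by
      rw [smul_sub, sub_smul, one_smul]; abel
    have h2 := hconv.2 (Set.mem_univ z) (Set.mem_univ w)
      (by linarith [ht.2] : (0:ℝ) ≤ 1 - t) (le_of_lt ht.1) (by ring)
    have h3 : φ t ≤ f z + t * (f w - f z) := by
      rw [hφ]; simp only []
      rw [h1]
      calc f ((1 - t) • z + t • w) ≤ (1 - t) * f z + t * f w := h2
        _ = f z + t * (f w - f z) := by ring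
    rw [slope_def_field]
    rw [hφ0]
    have ht0 : (0:ℝ) < t := ht.1
    rw [div_le_iff₀ (by simpa using ht0)]
    simp only [sub_zero]
    linarith [h3]
  have h2 : Tendsto (slope φ 0) (nhdsWithin 0 (Set.Ioi 0)) (nhds (ip (gf z) (w - z))) := by
    refine (hasDerivAt_iff_tendsto_slope.1 hD).mono_left (nhdsWithin_mono 0 ?_)
    intro t ht
    exact ne_of_gt ht
  have h3 : ip (gf z) (w - z) ≤ f w - f z := by
    refine le_of_tendsto h2 ?_
    filter_upwards [Ioc_mem_nhdsGT_of_mem (Set.mem_Ico.2 ⟨le_refl _, zero_lt_one⟩)] with t ht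
    exact key t ht
  linarith

lemma grad_min_perp {f : Matrix (Fin m) (Fin d) ℝ → ℝ}
    {gf : Matrix (Fin m) (Fin d) ℝ → Matrix (Fin m) (Fin d) ℝ}
    (hgrad : ∀ x v : Matrix (Fin m) (Fin d) ℝ,
      HasDerivAt (fun t : ℝ => f (x + t • v)) (ip (gf x) v) 0)
    {xs : Matrix (Fin m) (Fin d) ℝ}
    (hxsC : xs ∈ cC m d) (hxsMin : ∀ z ∈ cC m d, f xs ≤ f z) :
    gf xs ∈ cPerp m d := by
  classical
  obtain ⟨vx, hvx⟩ := hxsC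
  intro j
  set v : Matrix (Fin m) (Fin d) ℝ := Matrix.of (fun _ j' => if j' = j then (1:ℝ) else 0) with hv
  have hmin : IsLocalMin (fun t : ℝ => f (xs + t • v)) 0 := by
    refine Filter.Eventually.of_forall fun t => ?_
    have : xs + t • v ∈ cC m d := by
      refine ⟨fun j' => vx j' + t * (if j' = j then (1:ℝ) else 0), fun i j' => ?_⟩
      simp [hvx, hv, Matrix.add_apply, Matrix.smul_apply]
    simpa using hxsMin _ this
  have h0 := hmin.hasDerivAt_eq_zero (hgrad xs v)
  have : ip (gf xs) v = ∑ i, gf xs i j := by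
    unfold ip
    refine Finset.sum_congr rfl fun i _ => ?_
    simp [hv]
  rw [this] at h0
  exact h0

end aux3

section aux4
open Matrix
variable {m d : ℕ}

lemma exists_w0 (hm : 0 < m) (hd : 0 < d)
    {B : Matrix (Fin m) (Fin m) ℝ} (hB : B.PosSemidef)
    (hB1 : B.mulVec (fun _ => (1:ℝ)) = 0)
    {lam2 : ℝ} (hlam2 : 0 < lam2)
    (hBlow : ∀ z ∈ cPerp m d, lam2 * ip z z ≤ ip (B * z) z)
    {g : Matrix (Fin m) (Fin d) ℝ} (hg : g ∈ cPerp m d) :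
    ∃ w ∈ cPerp m d, B * w = g := by
  classical
  set j0 : Fin d := ⟨0, hd⟩ with hj0
  have hvec : ∀ v : Fin m → ℝ, (∑ i, v i) = 0 → v ≠ 0 →
      0 < dotProduct v (B.mulVec v) := by
    intro v hv hv0
    set E : Matrix (Fin m) (Fin d) ℝ := Matrix.of (fun i j => if j = j0 then v i else 0) with hE
    have hEperp : E ∈ cPerp m d := by
      intro j
      by_cases h : j = j0 <;> simp [hE, h, hv]
    have hipE : ip E E = ∑ i, v i * v i := by
      unfold ip
      refine Finset.sum_congr rfl fun i _ => ?_
      simp [hE]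
    have hipBE : ip (B * E) E = dotProduct v (B.mulVec v) := by
      unfold ip dotProduct
      refine Finset.sum_congr rfl fun i _ => ?_
      rw [Finset.sum_eq_single j0]
      · simp [hE, Matrix.mul_apply, Matrix.mulVec, dotProduct, mul_comm]
      · intro j _ hj; simp [hE, hj]
      · intro h; exact absurd (Finset.mem_univ _) h
    have hlow := hBlow E hEperp
    rw [hipE, hipBE] at hlow
    have hpos : 0 < ∑ i, v i * v i := by
      rcases Function.ne_iff.1 hv0 with ⟨i, hi⟩
      refine Finset.sum_pos' (fun k _ => mul_self_nonneg _) ⟨i, Finset.mem_univ _, ?_⟩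
      exact mul_self_pos.2 hi
    calc (0:ℝ) < lam2 * ∑ i, v i * v i := by positivity
      _ ≤ _ := hlow
  -- B' := B + J is positive definite
  set J : Matrix (Fin m) (Fin m) ℝ := Matrix.of (fun _ _ => (1:ℝ)) with hJ
  have hJherm : J.IsHermitian := by
    ext i k; simp [hJ, Matrix.conjTranspose_apply]
  have hB' : (B + J).PosDef := by
    refine Matrix.PosDef.of_dotProduct_mulVec_pos ?_ ?_
    · exact hB.1.add hJherm
    · intro v hv0
      have hstar : star v = v := by
        funext i; simp
      rw [hstar, Matrix.add_mulVec, dotProduct_add]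
      have hJv : dotProduct v (J.mulVec v) = (∑ i, v i) * (∑ i, v i) := by
        unfold dotProduct Matrix.mulVec dotProduct
        simp only [hJ, Matrix.of_apply, one_mul]
        rw [← Finset.sum_mul]
      by_cases hs : (∑ i, v i) = 0
      · have h1 := hvec v hs hv0
        have h2 : dotProduct v (J.mulVec v) = 0 := by rw [hJv, hs, zero_mul]
        linarith
      · have h1 : 0 ≤ dotProduct v (B.mulVec v) := by
          have := hB.dotProduct_mulVec_nonneg v
          rwa [hstar] at this
        have h2 : 0 < dotProduct v (J.mulVec v) := by
          rw [hJv]; exact mul_self_pos.2 hs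
        linarith
  have hdet : IsUnit (B + J).det := (Matrix.isUnit_iff_isUnit_det _).1 hB'.isUnit
  set w : Matrix (Fin m) (Fin d) ℝ := (B + J)⁻¹ * g with hw
  have hBJw : (B + J) * w = g := by
    rw [hw, ← Matrix.mul_assoc, Matrix.mul_nonsing_inv _ hdet, Matrix.one_mul]
  have hBwPerp : B * w ∈ cPerp m d := mul_mem_cPerp hB1 hB.1 w
  have hcolw : ∀ j, ∑ k, w k j = 0 := by
    intro j
    have h1 : ∑ i, ((B + J) * w) i j = ∑ i, g i j := by rw [hBJw]
    rw [hg j] at h1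
    have h2 : ∑ i, ((B + J) * w) i j
        = ∑ i, (B * w) i j + ∑ i, (J * w) i j := by
      rw [Matrix.add_mul, ← Finset.sum_add_distrib]
      refine Finset.sum_congr rfl fun i _ => by simp [Matrix.add_apply]
    have h3 : ∑ i, (J * w) i j = (m : ℝ) * ∑ k, w k j := by
      have : ∀ i, (J * w) i j = ∑ k, w k j := by
        intro i; simp [hJ, Matrix.mul_apply]
      rw [Finset.sum_congr rfl fun i _ => this i, Finset.sum_const, Finset.card_univ,
        Fintype.card_fin, nsmul_eq_mul]
    rw [h2, hBwPerp j, h3, zero_add] at h1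
    have hm' : (m : ℝ) ≠ 0 := Nat.cast_ne_zero.2 hm.ne'
    exact (mul_eq_zero.1 h1).resolve_left hm'
  have hJw : J * w = 0 := by
    ext i j
    simp [hJ, Matrix.mul_apply, hcolw j]
  refine ⟨w, hcolw, ?_⟩
  have := hBJw
  rw [Matrix.add_mul, hJw, add_zero] at this
  exact this

end aux4

set_option maxHeartbeats 1000000 in
/-- ergodic O(1/T) rate of the (non-accelerated) primal-dual
method in the Bregman distance. -/
theorem stmt_9 {m d : ℕ} (f : Matrix (Fin m) (Fin d) ℝ → ℝ)
    (gf : Matrix (Fin m) (Fin d) ℝ → Matrix (Fin m) (Fin d) ℝ)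
    (L_f : ℝ) (hLf : 0 < L_f)
    (hconv : ConvexOn ℝ Set.univ f)
    (hgrad : ∀ x v : Matrix (Fin m) (Fin d) ℝ,
      HasDerivAt (fun t : ℝ => f (x + t • v)) (ip (gf x) v) 0)
    (hsmooth : ∀ z w : Matrix (Fin m) (Fin d) ℝ,
      f w ≤ f z + ip (gf z) (w - z) + L_f / 2 * ip (w - z) (w - z))
    (A B : Matrix (Fin m) (Fin m) ℝ)
    (hA : A.PosSemidef) (hIA : ((1 : Matrix (Fin m) (Fin m) ℝ) - A).PosSemidef)
    (hA1 : ((1 : Matrix (Fin m) (Fin m) ℝ) - A).mulVec (fun _ => (1 : ℝ)) = 0)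
    (hB : B.PosSemidef) (hB1 : B.mulVec (fun _ => (1 : ℝ)) = 0)
    (γ τ : ℝ) (hγ : 0 < γ) (hτ : 0 < τ)
    (hPSD : ((1 - γ * L_f) • (1 : Matrix (Fin m) (Fin m) ℝ) - (γ * τ) • B).PosSemidef)
    (lam2 : ℝ) (hlam2 : 0 < lam2)
    (hBlow : ∀ z ∈ cPerp m d, lam2 * ip z z ≤ ip (B * z) z)
    (x y yh : ℕ → Matrix (Fin m) (Fin d) ℝ)
    (hy1 : y 1 = 0) (hyh1 : yh 1 = τ • (B * x 1))
    (hx : ∀ k ≥ 1, x (k + 1) = A * (x k - γ • (gf (x k) + yh k)))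
    (hy : ∀ k ≥ 1, y (k + 1) = y k + τ • (B * x (k + 1)))
    (hyh : ∀ k ≥ 1, yh (k + 1) = (2 : ℝ) • y (k + 1) - y k)
    (xs : Matrix (Fin m) (Fin d) ℝ)
    (hxsC : xs ∈ cC m d) (hxsMin : ∀ z ∈ cC m d, f xs ≤ f z)
    (T : ℕ) (hT : 2 ≤ T) :
    breg f gf ((1 / ((T : ℝ) - 1)) • ∑ k ∈ Finset.Icc 2 T, x k) xs ≤
      (1 / ((T : ℝ) - 1)) *
        (ip (x 1 - xs) (x 1 - xs) / (2 * γ) +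
          ip (gf xs) (gf xs) / (2 * τ * lam2)) := by
  classical
  -- degenerate dimensions
  by_cases hmd : m = 0 ∨ d = 0
  · haveI : Subsingleton (Matrix (Fin m) (Fin d) ℝ) := by
      rcases hmd with h | h
      · exact ⟨fun a b => by ext i j; exact absurd i.isLt (by omega)⟩
      · exact ⟨fun a b => by ext i j; exact absurd j.isLt (by omega)⟩
    have hip0 : ∀ a b : Matrix (Fin m) (Fin d) ℝ, ip a b = 0 := by
      intro a b
      unfold ip
      rcases hmd with h | h
      · exact Finset.sum_eq_zero fun i _ => absurd i.isLt (by omega)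
      · exact Finset.sum_eq_zero fun i _ =>
          Finset.sum_eq_zero fun j _ => absurd j.isLt (by omega)
    have hxsEq : ((1 / ((T : ℝ) - 1)) • ∑ k ∈ Finset.Icc 2 T, x k) = xs :=
      Subsingleton.elim _ _
    rw [hxsEq]
    unfold breg
    rw [hip0, hip0, hip0]
    simp
  push_neg at hmd
  have hm : 0 < m := Nat.pos_of_ne_zero hmd.1
  have hd : 0 < d := Nat.pos_of_ne_zero hmd.2
  -- setup
  set gs := gf xs with hgs
  have hgsPerp : gs ∈ cPerp m d := grad_min_perp hgrad hxsC hxsMin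
  have hgs0 : ip gs xs = 0 := ip_perp_cC hgsPerp hxsC
  have hBxs : B * xs = 0 := mul_cC_eq_zero hB1 hxsC
  obtain ⟨w0, hw0Perp, hw0⟩ := exists_w0 hm hd hB hB1 hlam2 hBlow hgsPerp
  set u : ℕ → Matrix (Fin m) (Fin d) ℝ :=
    fun k => w0 + τ • ∑ j ∈ Finset.Icc 2 k, x j with hu
  have hu1 : u 1 = w0 := by
    simp only [hu]
    rw [Finset.Icc_eq_empty (by omega), Finset.sum_empty, smul_zero, add_zero]
  -- y and yh in terms of sums
  have hyS : ∀ k, 1 ≤ k → y k = τ • (B * ∑ j ∈ Finset.Icc 2 k, x j) := by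
    intro k
    induction k with
    | zero => omega
    | succ n ih =>
      intro _
      by_cases hn : 1 ≤ n
      · rw [hy n hn, ih hn, Finset.sum_Icc_succ_top (by omega : 2 ≤ n + 1),
          Matrix.mul_add, smul_add]
      · have hn0 : n = 0 := by omega
        subst hn0
        rw [hy1, Finset.Icc_eq_empty (by omega), Finset.sum_empty, Matrix.mul_zero,
          smul_zero]
  have hyhS : ∀ k, 1 ≤ k →
      yh k = τ • (B * ∑ j ∈ Finset.Icc 2 k, x j) + τ • (B * x k) := by
    intro k
    induction k with
    | zero => omega
    | succ n ih =>
      intro _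
      by_cases hn : 1 ≤ n
      · rw [hyh n hn, hy n hn, hyS n hn, Finset.sum_Icc_succ_top (by omega : 2 ≤ n + 1),
          Matrix.mul_add, smul_add]
        module
      · have hn0 : n = 0 := by omega
        subst hn0
        rw [hyh1, Finset.Icc_eq_empty (by omega), Finset.sum_empty, Matrix.mul_zero,
          smul_zero, zero_add]
  -- the one-step estimate
  have step : ∀ k, 1 ≤ k → breg f gf (x (k + 1)) xs ≤
      (ip (x k - xs) (x k - xs) - ip (x (k + 1) - xs) (x (k + 1) - xs)) / (2 * γ) +
      (ip (B * u k) (u k) - ip (B * u (k + 1)) (u (k + 1))) / (2 * τ) := by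
    intro k hk
    have hqx := hx k hk
    have hyhk := hyhS k hk
    have husucc : u (k + 1) = u k + τ • x (k + 1) := by
      simp only [hu]
      rw [Finset.sum_Icc_succ_top (by omega : 2 ≤ k + 1), smul_add]
      abel
    have hBu : B * u k = gs + τ • (B * ∑ j ∈ Finset.Icc 2 k, x j) := by
      simp only [hu]
      rw [Matrix.mul_add, Matrix.mul_smul, hw0]
    set p := x k with hp
    set q := x (k + 1) with hqdef
    set G := gf p with hG
    set h := yh k with hh
    set s := p - γ • (G + h) with hsdef
    -- hqx : q = A * s
    have he : s - q = (1 - A) * s := by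
      rw [hqx, Matrix.sub_mul, Matrix.one_mul]
    have hsm := hsmooth p q
    have hcv := grad_conv hconv hgrad p xs
    have hGsplit : ip G (q - p) - ip G (xs - p) = ip G (q - xs) := by
      rw [← ip_sub_right]; congr 1; abel
    have E4 : f q - f xs ≤ ip G (q - xs) + L_f / 2 * ip (q - p) (q - p) := by
      linarith [hsm, hcv, hGsplit]
    have hpq : p - q = γ • (G + h) + (s - q) := by rw [hsdef]; abel
    have hEn : ip (p - q) (q - xs)
        = γ * ip G (q - xs) + γ * ip h (q - xs) + ip (s - q) (q - xs) := by
      rw [hpq, ip_add_left, ip_smul_left, ip_add_left]; ring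
    have hpolar : ip (p - q) (q - xs)
        = (ip (p - xs) (p - xs) - ip (q - xs) (q - xs) - ip (q - p) (q - p)) / 2 := by
      have h1 := ip_polar (p - xs) (q - xs)
      have h2 : (p - xs) - (q - xs) = p - q := by abel
      rw [h2] at h1
      rw [h1, ip_sub_swap p q]
    have hze : 0 ≤ ip (s - q) (q - xs) := by
      have h1 : 0 ≤ ip (s - q) q := by
        rw [he, hqx]; exact psd_sandwich hA hIA s
      have h2 : ip (s - q) xs = 0 := by
        rw [he, ip_symm_mul hIA.1, mul_cC_eq_zero hA1 hxsC, ip_zero_right]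
      rw [ip_sub_right, h2]; linarith
    have hhxs : ip h xs = 0 := by
      rw [hyhk, ip_add_left, ip_smul_left, ip_smul_left,
        ip_symm_mul hB.1, ip_symm_mul hB.1, hBxs, ip_zero_right, ip_zero_right]
      ring
    have hhq : ip h (q - xs) = ip h q := by rw [ip_sub_right, hhxs, sub_zero]
    rw [hhq] at hEn
    have hhdecomp : h = (B * u k - gs) + τ • (B * p) := by
      rw [hyhk, hBu]; abel
    have E5 : ip h q = ip (B * u k) q - ip gs q + τ * ip (B * p) q := by
      rw [hhdecomp, ip_add_left, ip_sub_left, ip_smul_left]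
    have E6 : ip (B * u (k + 1)) (u (k + 1))
        = ip (B * u k) (u k) + 2 * τ * ip (B * u k) q + τ ^ 2 * ip (B * q) q := by
      rw [husucc, Matrix.mul_add, Matrix.mul_smul]
      simp only [ip_add_left, ip_add_right, ip_smul_left, ip_smul_right]
      rw [ip_mul_symm hB.1 (u k) q]
      ring
    have E7 : ip (B * (q - p)) (q - p)
        = ip (B * q) q - 2 * ip (B * p) q + ip (B * p) p := by
      rw [Matrix.mul_sub]
      simp only [ip_sub_left, ip_sub_right]
      rw [ip_mul_symm hB.1 p q]
      ring
    have E8 : 0 ≤ (1 - γ * L_f) * ip (q - p) (q - p)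
        - γ * τ * ip (B * (q - p)) (q - p) := by
      have h0 := psd_ip hPSD (q - p)
      have hexp : ((1 - γ * L_f) • (1 : Matrix (Fin m) (Fin m) ℝ) - (γ * τ) • B) * (q - p)
          = (1 - γ * L_f) • (q - p) - (γ * τ) • (B * (q - p)) := by
        rw [Matrix.sub_mul, Matrix.smul_mul, Matrix.smul_mul, Matrix.one_mul]
      rw [hexp, ip_sub_left, ip_smul_left, ip_smul_left] at h0
      linarith
    have E9 : 0 ≤ ip (B * p) p := psd_ip hB p
    have E0 : breg f gf q xs = f q - f xs - ip gs q := by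
      simp only [breg, ← hgs]
      rw [ip_sub_right, hgs0]
      ring
    -- scaled facts
    have mE4 : 2 * γ * τ * (f q - f xs)
        ≤ 2 * γ * τ * (ip G (q - xs) + L_f / 2 * ip (q - p) (q - p)) :=
      mul_le_mul_of_nonneg_left E4 (by positivity)
    have mE1 : 2 * τ * ip (p - q) (q - xs)
        = 2 * τ * (γ * ip G (q - xs) + γ * ip h q + ip (s - q) (q - xs)) := by
      rw [hEn]
    have mE2 : 2 * τ * ip (p - q) (q - xs)
        = 2 * τ * ((ip (p - xs) (p - xs) - ip (q - xs) (q - xs)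
            - ip (q - p) (q - p)) / 2) := by
      rw [hpolar]
    have mE3 : 0 ≤ 2 * τ * ip (s - q) (q - xs) :=
      mul_nonneg (by positivity) hze
    have mE5 : 2 * γ * τ * ip h q
        = 2 * γ * τ * (ip (B * u k) q - ip gs q + τ * ip (B * p) q) := by rw [E5]
    have mE6 : γ * ip (B * u (k + 1)) (u (k + 1))
        = γ * (ip (B * u k) (u k) + 2 * τ * ip (B * u k) q + τ ^ 2 * ip (B * q) q) := by
      rw [E6]
    have mE7 : γ * τ ^ 2 * ip (B * (q - p)) (q - p)
        = γ * τ ^ 2 * (ip (B * q) q - 2 * ip (B * p) q + ip (B * p) p) := by rw [E7]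
    have mE8 : 0 ≤ τ * ((1 - γ * L_f) * ip (q - p) (q - p)
        - γ * τ * ip (B * (q - p)) (q - p)) :=
      mul_nonneg hτ.le E8
    have mE9 : 0 ≤ γ * τ ^ 2 * ip (B * p) p := by positivity
    have SG : 2 * γ * τ * breg f gf q xs
        ≤ τ * (ip (p - xs) (p - xs) - ip (q - xs) (q - xs))
          + γ * (ip (B * u k) (u k) - ip (B * u (k + 1)) (u (k + 1))) := by
      rw [E0]
      linarith [mE4, mE1, mE2, mE3, mE5, mE6, mE7, mE8, mE9]
    have hconvGoal : (ip (p - xs) (p - xs) - ip (q - xs) (q - xs)) / (2 * γ)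
        + (ip (B * u k) (u k) - ip (B * u (k + 1)) (u (k + 1))) / (2 * τ)
        = (τ * (ip (p - xs) (p - xs) - ip (q - xs) (q - xs))
          + γ * (ip (B * u k) (u k) - ip (B * u (k + 1)) (u (k + 1)))) / (2 * γ * τ) := by
      field_simp
    rw [hconvGoal, le_div_iff₀ (by positivity)]
    linarith [SG]
  -- telescoping
  set n := T - 1 with hn
  have hn1 : 1 ≤ n := by omega
  have hTn : T = n + 1 := by omega
  set g : ℕ → ℝ := fun j =>
    ip (x (j + 1) - xs) (x (j + 1) - xs) / (2 * γ)
      + ip (B * u (j + 1)) (u (j + 1)) / (2 * τ) with hgdef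
  have hstep' : ∀ i ∈ Finset.range n, breg f gf (x (i + 2)) xs ≤ g i - g (i + 1) := by
    intro i _
    have h1 := step (i + 1) (by omega)
    have h2 : i + 1 + 1 = i + 2 := by omega
    rw [h2, sub_div, sub_div] at h1
    simp only [hgdef, h2]
    linarith [h1]
  have htel : ∑ i ∈ Finset.range n, (g i - g (i + 1)) = g 0 - g n :=
    Finset.sum_range_sub' g n
  have hgn : 0 ≤ g n := by
    simp only [hgdef]
    have h1 := ip_self_nonneg (x (n + 1) - xs)
    have h2 := psd_ip hB (u (n + 1))
    have h3 : (0:ℝ) < 2 * γ := by positivity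
    have h4 : (0:ℝ) < 2 * τ := by positivity
    exact add_nonneg (div_nonneg h1 h3.le) (div_nonneg h2 h4.le)
  have hsum : ∑ i ∈ Finset.range n, breg f gf (x (i + 2)) xs ≤ g 0 := by
    calc ∑ i ∈ Finset.range n, breg f gf (x (i + 2)) xs
        ≤ ∑ i ∈ Finset.range n, (g i - g (i + 1)) := Finset.sum_le_sum hstep'
      _ = g 0 - g n := htel
      _ ≤ g 0 := by linarith
  -- bound on the initial dual term
  have hb1 : ip (B * u 1) (u 1) ≤ ip gs gs / lam2 := by
    rw [hu1]
    have hlow := hBlow w0 hw0Perp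
    have hipw : ip (B * w0) w0 = ip gs w0 := by rw [hw0]
    have hyoung : 0 ≤ ip (gs - lam2 • w0) (gs - lam2 • w0) := ip_self_nonneg _
    have hexp : ip (gs - lam2 • w0) (gs - lam2 • w0)
        = ip gs gs - 2 * lam2 * ip gs w0 + lam2 ^ 2 * ip w0 w0 := by
      simp only [ip_sub_left, ip_sub_right, ip_smul_left, ip_smul_right]
      rw [ip_comm w0 gs]
      ring
    rw [hipw, le_div_iff₀ hlam2]
    rw [hipw] at hlow
    linarith [hlow, hyoung, hexp, mul_le_mul_of_nonneg_left hlow hlam2.le]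
  have hg0 : g 0 ≤ ip (x 1 - xs) (x 1 - xs) / (2 * γ) + ip gs gs / (2 * τ * lam2) := by
    simp only [hgdef]
    norm_num
    have h1 : ip (B * u 1) (u 1) / (2 * τ) ≤ (ip gs gs / lam2) / (2 * τ) := by
      gcongr
    have h2 : (ip gs gs / lam2) / (2 * τ) = ip gs gs / (2 * τ * lam2) := by
      rw [div_div]; ring_nf
    linarith [h1, h2]
  -- reindex the sum
  have hre : ∀ F : ℕ → ℝ, ∑ k ∈ Finset.Icc 2 T, F k = ∑ i ∈ Finset.range n, F (i + 2) := by
    intro F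
    rw [← Finset.Ico_add_one_right_eq_Icc, Finset.sum_Ico_eq_sum_range]
    have h2 : T + 1 - 2 = n := by omega
    rw [h2]
    exact Finset.sum_congr rfl fun i _ => by rw [Nat.add_comm]
  have hcard : (Finset.Icc 2 T).card = n := by rw [Nat.card_Icc]; omega
  have hnR : (0:ℝ) < (n:ℝ) := by exact_mod_cast hn1
  -- Jensen
  have hjen : f ((1 / (n:ℝ)) • ∑ k ∈ Finset.Icc 2 T, x k)
      ≤ (1 / (n:ℝ)) * ∑ k ∈ Finset.Icc 2 T, f (x k) := by
    have hw : ∑ _k ∈ Finset.Icc 2 T, (1 / (n:ℝ)) = 1 := by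
      rw [Finset.sum_const, hcard, nsmul_eq_mul]
      field_simp
    have h0 := hconv.map_sum_le (t := Finset.Icc 2 T) (w := fun _ => 1 / (n:ℝ))
      (p := x) (fun i _ => by positivity) hw (fun i _ => Set.mem_univ _)
    rw [← Finset.smul_sum] at h0
    simpa [smul_eq_mul, Finset.mul_sum] using h0
  have hbregk : ∀ k, breg f gf (x k) xs = f (x k) - f xs - ip gs (x k) := by
    intro k
    simp only [breg, ← hgs]
    rw [ip_sub_right, hgs0]
    ring
  have hXbar : breg f gf ((1 / (n:ℝ)) • ∑ k ∈ Finset.Icc 2 T, x k) xs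
      = f ((1 / (n:ℝ)) • ∑ k ∈ Finset.Icc 2 T, x k) - f xs
        - (1 / (n:ℝ)) * ∑ k ∈ Finset.Icc 2 T, ip gs (x k) := by
    simp only [breg, ← hgs]
    rw [ip_sub_right, hgs0, ip_smul_right, ip_sum_right]
    ring
  set S : ℝ := ∑ k ∈ Finset.Icc 2 T, breg f gf (x k) xs with hSdef
  have hS1 : S = (∑ k ∈ Finset.Icc 2 T, f (x k)) - (n:ℝ) * f xs
      - ∑ k ∈ Finset.Icc 2 T, ip gs (x k) := by
    rw [hSdef, Finset.sum_congr rfl (fun k _ => hbregk k),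
      Finset.sum_sub_distrib, Finset.sum_sub_distrib, Finset.sum_const, hcard,
      nsmul_eq_mul]
  have hSbound : S ≤ g 0 := by
    rw [hSdef, hre (fun k => breg f gf (x k) xs)]
    exact hsum
  have havg : breg f gf ((1 / (n:ℝ)) • ∑ k ∈ Finset.Icc 2 T, x k) xs
      ≤ (1 / (n:ℝ)) * S := by
    rw [hXbar]
    have e1 : (1 / (n:ℝ)) * S = (1 / (n:ℝ)) * (∑ k ∈ Finset.Icc 2 T, f (x k))
        - f xs - (1 / (n:ℝ)) * ∑ k ∈ Finset.Icc 2 T, ip gs (x k) := by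
      rw [hS1]
      field_simp
    linarith [hjen, e1]
  have hTcast : (T:ℝ) - 1 = (n:ℝ) := by
    rw [hTn]
    push_cast
    ring
  rw [hTcast]
  calc breg f gf ((1 / (n:ℝ)) • ∑ k ∈ Finset.Icc 2 T, x k) xs
      ≤ (1 / (n:ℝ)) * S := havg
    _ ≤ (1 / (n:ℝ)) * (ip (x 1 - xs) (x 1 - xs) / (2 * γ) + ip gs gs / (2 * τ * lam2)) := by
        have := hSbound.trans hg0
        exact mul_le_mul_of_nonneg_left this (by positivity)
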